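/- Let k be a principal ideal domain, Q an ordered set, and B : Q → Set a functor. The following are equivalent: (i) for every q ∈ Q, the colimit projection ι_q : B(q) → colim B is injective; (ii) the persistence module k_Q(B) (pointwise free k-module on B) is upper set decomposable; (iii) for every q ∈ Q, the colimit projection k_Q(B)(q) → colim k_Q(B) is a monomorphism of k-modules. -/

import Mathlib

open CategoryTheory CategoryTheory.Limits

namespace SpanningTrees

/-- The upper set module `pt[U] : Q → Set` of an upper set `U ⊆ Q`: it sends `q` to a
one-point set if `q ∈ U` and to the empty set otherwise, with the evident maps. -/
def ptU (Q : Type) [PartialOrder Q] (U : Set Q) (hU : IsUpperSet U) : Q ⥤ Type where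
  obj q := PLift (q ∈ U)
  map {q q'} h := TypeCat.ofHom fun p => PLift.up (hU (leOfHom h) p.down)

/-- A persistence module `M : Q ⥤ Mod_k` is upper set decomposable if it is isomorphic
to a direct sum `⊕ᵢ k_Q(pt[Uᵢ])` of pointwise free modules on upper set modules. -/
def UpperSetDecomposable (k : Type) [CommRing k] (Q : Type) [PartialOrder Q]
    (M : Q ⥤ ModuleCat k) : Prop :=
  ∃ (I : Type) (U : I → Set Q) (hU : ∀ i, IsUpperSet (U i)),
    Nonempty (M ≅ ∐ fun i : I => ptU Q (U i) (hU i) ⋙ ModuleCat.free k)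

noncomputable section Aux

set_option linter.unusedSectionVars false

variable (k : Type) [CommRing k] [IsDomain k]
variable (Q : Type) [PartialOrder Q]

instance : PreservesColimits (ModuleCat.free k) :=
  (ModuleCat.adj k).leftAdjoint_preservesColimits

/-- A map of free modules induced by an injective map is a monomorphism, and conversely. -/
lemma free_map_mono_iff {X Y : Type} (f : X ⟶ Y) :
    Mono ((ModuleCat.free k).map f) ↔ Function.Injective f := by
  rw [ModuleCat.mono_iff_injective]
  constructor
  · intro h x y hxy
    have : (ModuleCat.free k).map f (ModuleCat.freeMk x) =
        (ModuleCat.free k).map f (ModuleCat.freeMk y) := by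
      simp [hxy]
    have h2 := h this
    simp only [ModuleCat.freeMk, ModuleCat.free_map_apply] at h2
    rcases (Finsupp.single_eq_single_iff _ _ _ _).mp h2 with ⟨h3, _⟩ | ⟨h3, _⟩
    · exact h3
    · exact absurd h3 one_ne_zero
  · intro h
    exact Finsupp.mapDomain_injective h

/-- Transport of monomorphy of colimit projections along an isomorphism of functors. -/
lemma mono_ι_of_iso {M N : Q ⥤ ModuleCat k} (e : M ≅ N) (q : Q) :
    Mono (colimit.ι N q) → Mono (colimit.ι M q) := by
  intro hm
  have h : colimit.ι M q ≫ (HasColimit.isoOfNatIso e).hom = e.hom.app q ≫ colimit.ι N q :=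
    HasColimit.isoOfNatIso_ι_hom e q
  have h2 : colimit.ι M q = (e.hom.app q ≫ colimit.ι N q) ≫ (HasColimit.isoOfNatIso e).inv := by
    rw [← h]; simp
  rw [h2]
  have : Mono (e.hom.app q) := inferInstance
  exact mono_comp _ _

/-- The colimit projection of `B ⋙ free k` is mono iff that of `B` is injective. -/
lemma mono_colimit_ι_free_iff (B : Q ⥤ Type) (q : Q) :
    Mono (colimit.ι (B ⋙ ModuleCat.free k) q) ↔ Function.Injective (colimit.ι B q) := by
  rw [← free_map_mono_iff k (colimit.ι B q)]
  have h : colimit.ι (B ⋙ ModuleCat.free k) q ≫ (preservesColimitIso (ModuleCat.free k) B).inv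
      = (ModuleCat.free k).map (colimit.ι B q) := ι_preservesColimitIso_inv _ _ _
  constructor
  · intro hm
    rw [← h]
    exact mono_comp _ _
  · intro hm
    have h2 : colimit.ι (B ⋙ ModuleCat.free k) q
        = (ModuleCat.free k).map (colimit.ι B q) ≫ (preservesColimitIso (ModuleCat.free k) B).hom := by
      rw [← h]; simp
    rw [h2]
    exact mono_comp _ _

/-- The pointwise sigma of a family of functors to `Type`. -/
def sigmaFunctor {I : Type} (F : I → (Q ⥤ Type)) : Q ⥤ Type where
  obj q := Σ i, (F i).obj q
  map {q q'} h := TypeCat.ofHom fun p => ⟨p.1, (F p.1).map h p.2⟩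
  map_id q := ConcreteCategory.hom_ext _ _ fun p => by simp
  map_comp {a b c} f g := ConcreteCategory.hom_ext _ _ fun p => by simp

/-- The pointwise sigma as a cocone over the discrete diagram. -/
def sigmaCocone {I : Type} (F : I → (Q ⥤ Type)) : Cocone (Discrete.functor F) where
  pt := sigmaFunctor Q F
  ι := Discrete.natTrans fun ⟨i⟩ =>
    { app := fun q => TypeCat.ofHom fun x => ⟨i, x⟩
      naturality := fun q q' h => rfl }

/-- The pointwise sigma is a coproduct of the family. -/
def sigmaIsColimit {I : Type} (F : I → (Q ⥤ Type)) : IsColimit (sigmaCocone Q F) where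
  desc c :=
    { app := fun q => TypeCat.ofHom fun (p : Σ i, (F i).obj q) => (c.ι.app ⟨p.1⟩).app q p.2
      naturality := fun q q' h => by
        ext p
        exact types_congr_hom ((c.ι.app ⟨p.1⟩).naturality h) p.2 }
  fac c := fun ⟨i⟩ => rfl
  uniq c m hm := by
    ext q (p : Σ i, (F i).obj q)
    exact types_congr_hom (congrFun (congrArg NatTrans.app (hm ⟨p.1⟩)) q) p.2

/-- The categorical coproduct agrees with the pointwise sigma. -/
def sigmaIso {I : Type} (F : I → (Q ⥤ Type)) : (∐ F) ≅ sigmaFunctor Q F :=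
  colimit.isoColimitCocone ⟨sigmaCocone Q F, sigmaIsColimit Q F⟩

/-- Transport of injectivity of colimit projections along an isomorphism of functors. -/
lemma injective_ι_of_iso {M N : Q ⥤ Type} (e : M ≅ N) (q : Q)
    (hm : Function.Injective (colimit.ι N q)) : Function.Injective (colimit.ι M q) := by
  have h : colimit.ι M q ≫ (HasColimit.isoOfNatIso e).hom = e.hom.app q ≫ colimit.ι N q :=
    HasColimit.isoOfNatIso_ι_hom e q
  intro x y hxy
  have h2 : (HasColimit.isoOfNatIso e).hom (colimit.ι M q x)
      = (HasColimit.isoOfNatIso e).hom (colimit.ι M q y) := by rw [hxy]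
  rw [← types_comp_apply (colimit.ι M q) (HasColimit.isoOfNatIso e).hom,
    ← types_comp_apply (colimit.ι M q) (HasColimit.isoOfNatIso e).hom, h] at h2
  have h3 := hm h2
  have h4 : Function.Injective (e.hom.app q) :=
    (CategoryTheory.isIso_iff_bijective _).mp inferInstance |>.1
  exact h4 h3

/-- The colimit projections of a pointwise sigma of upper set modules are injective. -/
lemma injective_ι_sigma {I : Type} (U : I → Set Q) (hU : ∀ i, IsUpperSet (U i)) (q : Q) :
    Function.Injective (colimit.ι (sigmaFunctor Q (fun i => ptU Q (U i) (hU i))) q) := by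
  set F := fun i => ptU Q (U i) (hU i)
  let c : Cocone (sigmaFunctor Q F) :=
    { pt := I
      ι := { app := fun q => TypeCat.ofHom fun p => p.1
             naturality := fun q q' h => rfl } }
  intro x y hxy
  have h1 : colimit.desc _ c (colimit.ι (sigmaFunctor Q F) q x)
      = colimit.desc _ c (colimit.ι (sigmaFunctor Q F) q y) := by rw [hxy]
  rw [← types_comp_apply (colimit.ι _ q) (colimit.desc _ c),
    ← types_comp_apply (colimit.ι _ q) (colimit.desc _ c), colimit.ι_desc] at h1
  obtain ⟨i, p⟩ := x
  obtain ⟨j, r⟩ := y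
  cases h1
  congr 1
  exact Subsingleton.elim (α := PLift (q ∈ U i)) _ _

lemma sigma_plift_ext {I : Type} {P : I → Prop} (x y : Σ i, PLift (P i)) (h : x.1 = y.1) :
    x = y := by
  obtain ⟨i, p⟩ := x
  obtain ⟨j, r⟩ := y
  cases h
  rw [Subsingleton.elim (α := PLift (P i)) p r]

/-- Applying the free functor pointwise commutes with pointwise sigma. -/
def freeSigmaIso {I : Type} (F : I → (Q ⥤ Type)) :
    (∐ fun i => F i ⋙ ModuleCat.free k) ≅ sigmaFunctor Q F ⋙ ModuleCat.free k :=
  letI W : (Q ⥤ Type) ⥤ (Q ⥤ ModuleCat k) := (Functor.whiskeringRight Q (Type) (ModuleCat k)).obj (ModuleCat.free k)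
  (HasColimit.isoOfNatIso (Discrete.natIso fun i => Iso.refl (W.obj (F i.as)) :
      Discrete.functor (fun i => F i ⋙ ModuleCat.free k) ≅ Discrete.functor F ⋙ W)) ≪≫
    (preservesColimitIso W (Discrete.functor F)).symm ≪≫
    Functor.isoWhiskerRight (sigmaIso Q F) (ModuleCat.free k)

/-- If all colimit projections of `B` are injective, then `B` decomposes as a sigma of
upper set modules, indexed by the elements of the colimit. -/
def decompIso (B : Q ⥤ Type) (hinj : ∀ q, Function.Injective (colimit.ι B q)) :
    B ≅ sigmaFunctor Q (fun c : colimit B =>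
      ptU Q {q | ∃ b, colimit.ι B q b = c}
        (fun q q' hle ⟨b, hb⟩ => ⟨B.map (homOfLE hle) b, by
          rw [← hb]; exact types_congr_hom (colimit.w B (homOfLE hle)) b⟩)) := by
  refine NatIso.ofComponents (fun q => Equiv.toIso
    { toFun := fun b => ⟨colimit.ι B q b, PLift.up ⟨b, rfl⟩⟩
      invFun := fun p => Classical.choose p.2.down
      left_inv := fun b => hinj q (Classical.choose_spec
        (⟨b, rfl⟩ : ∃ b', colimit.ι B q b' = colimit.ι B q b))
      right_inv := fun p => sigma_plift_ext _ _ (Classical.choose_spec p.2.down) }) ?_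
  intro q q' h
  ext b
  exact sigma_plift_ext _ _
    (show colimit.ι B q' (B.map h b) = colimit.ι B q b from types_congr_hom (colimit.w B h) b)

end Aux

/-- For a persistent set `B : Q → Set`, the following are equivalent:
(i) all colimit projections `B(q) → colim B` are injective;
(ii) the pointwise free persistence module `k_Q(B)` is upper set decomposable;
(iii) all colimit projections `k_Q(B)(q) → colim k_Q(B)` are monomorphisms. -/
theorem upperSetDecomposable_tfae
    (k : Type) [CommRing k] [IsDomain k] [IsPrincipalIdealRing k]
    (Q : Type) [PartialOrder Q] (B : Q ⥤ Type) :
    ((∀ q : Q, Function.Injective (colimit.ι B q)) ↔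
      UpperSetDecomposable k Q (B ⋙ ModuleCat.free k)) ∧
    (UpperSetDecomposable k Q (B ⋙ ModuleCat.free k) ↔
      ∀ q : Q, Mono (colimit.ι (B ⋙ ModuleCat.free k) q)) := by
  -- (i) → (ii)
  have h12 : (∀ q : Q, Function.Injective (colimit.ι B q)) →
      UpperSetDecomposable k Q (B ⋙ ModuleCat.free k) := by
    intro hinj
    refine ⟨colimit B, fun c => {q | ∃ b, colimit.ι B q b = c},
      fun c q q' hle => fun ⟨b, hb⟩ => ⟨B.map (homOfLE hle) b, by
        rw [← hb]; exact types_congr_hom (colimit.w B (homOfLE hle)) b⟩, ⟨?_⟩⟩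
    exact Functor.isoWhiskerRight (decompIso Q B hinj) (ModuleCat.free k) ≪≫
      (freeSigmaIso k Q _).symm
  -- (ii) → (iii)
  have h23 : UpperSetDecomposable k Q (B ⋙ ModuleCat.free k) →
      ∀ q : Q, Mono (colimit.ι (B ⋙ ModuleCat.free k) q) := by
    rintro ⟨I, U, hU, ⟨e⟩⟩ q
    refine mono_ι_of_iso k Q (e ≪≫ freeSigmaIso k Q (fun i => ptU Q (U i) (hU i))) q ?_
    exact (mono_colimit_ι_free_iff k Q _ q).mpr (injective_ι_sigma Q U hU q)
  -- (iii) → (i)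
  have h31 : (∀ q : Q, Mono (colimit.ι (B ⋙ ModuleCat.free k) q)) →
      ∀ q : Q, Function.Injective (colimit.ι B q) :=
    fun h q => (mono_colimit_ι_free_iff k Q B q).mp (h q)
  exact ⟨⟨h12, fun h2 => h31 (h23 h2)⟩, ⟨h23, fun h3 => h12 (h31 h3)⟩⟩

end SpanningTrees
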